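/- Let Q = [0,1]^ℕ be the Hilbert cube, 𝒦(Q) the hyperspace of nonempty compact subsets of Q with the Hausdorff metric, C(Q, Q) the space of continuous self-maps of Q with the compact-open topology, and ℕ^ℕ the Baire space. Suppose (𝓔_m)_{m∈ℕ} is a sequence of subsets of 𝒦(Q), each closed and upward-closed, and Φ : ℕ^ℕ → 𝒦(Q) is continuous. Then the set { (s, f) ∈ ℕ^ℕ × C(Q, Q) : for every y ∈ Q and every m ∈ ℕ, there is no K ∈ 𝓔_m with K ⊆ f⁻¹({y}) ∩ Φ(s) } is a Gδ set (a countable intersection of open sets) in ℕ^ℕ × C(Q, Q). -/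

import Mathlib

open TopologicalSpace

/-- The Hilbert cube `Q = [0,1]^ℕ` with a metric inducing the product topology. -/
noncomputable instance : MetricSpace (ℕ → unitInterval) := PiCountable.metricSpace

open Filter Set EMetric Topology

private lemma tendsto_edist_zero_of_tendsto {α : Type*} [EMetricSpace α]
    {u : ℕ → α} {a : α} (h : Filter.Tendsto u Filter.atTop (𝓝 a)) :
    Filter.Tendsto (fun n => edist (u n) a) Filter.atTop (𝓝 0) :=
  tendsto_iff_edist_tendsto_0.mp h

/-- Let `Q` be the Hilbert cube, `𝒦(Q)` the hyperspace of nonempty compact subsets of `Q`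
with the Hausdorff metric, `C(Q,Q)` the space of continuous self-maps of `Q` with the
compact-open topology, and `ℕ^ℕ` the Baire space. If each `E m ⊆ 𝒦(Q)` is closed and
upward-closed and `Φ : ℕ^ℕ → 𝒦(Q)` is continuous, then the set of pairs `(s, f)` such
that for every `y ∈ Q` and `m` no `K ∈ E m` satisfies `K ⊆ f⁻¹({y}) ∩ Φ(s)` is Gδ. -/
theorem isGδ_small_fibers
    (E : ℕ → Set (NonemptyCompacts (ℕ → unitInterval)))
    (hE : ∀ m, IsClosed (E m))
    (hup : ∀ m, ∀ K ∈ E m, ∀ L : NonemptyCompacts (ℕ → unitInterval),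
      (K : Set (ℕ → unitInterval)) ⊆ (L : Set (ℕ → unitInterval)) → L ∈ E m)
    (Φ : (ℕ → ℕ) → NonemptyCompacts (ℕ → unitInterval)) (hΦ : Continuous Φ) :
    IsGδ {p : (ℕ → ℕ) × C(ℕ → unitInterval, ℕ → unitInterval) |
      ∀ (y : ℕ → unitInterval) (m : ℕ),
        ¬ ∃ K ∈ E m, (K : Set (ℕ → unitInterval)) ⊆
          ⇑p.2 ⁻¹' {y} ∩ (Φ p.1 : Set (ℕ → unitInterval))} := by
  set Q := (ℕ → unitInterval)
  have hset : {p : (ℕ → ℕ) × C(Q, Q) |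
      ∀ (y : Q) (m : ℕ), ¬ ∃ K ∈ E m, (K : Set Q) ⊆ ⇑p.2 ⁻¹' {y} ∩ (Φ p.1 : Set Q)}
      = ⋂ m : ℕ, {p : (ℕ → ℕ) × C(Q, Q) |
        ¬ ∃ (y : Q), ∃ K ∈ E m, (K : Set Q) ⊆ ⇑p.2 ⁻¹' {y} ∩ (Φ p.1 : Set Q)} := by
    ext p
    simp only [mem_setOf_eq, mem_iInter]
    constructor
    · intro h m ⟨y, K, hK, hs⟩
      exact h y m ⟨K, hK, hs⟩
    · intro h y m ⟨K, hK, hs⟩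
      exact h m ⟨y, K, hK, hs⟩
  rw [hset]
  refine IsGδ.iInter fun m => IsOpen.isGδ ?_
  rw [show {p : (ℕ → ℕ) × C(Q, Q) |
        ¬ ∃ (y : Q), ∃ K ∈ E m, (K : Set Q) ⊆ ⇑p.2 ⁻¹' {y} ∩ (Φ p.1 : Set Q)}
      = {p : (ℕ → ℕ) × C(Q, Q) |
        ∃ (y : Q), ∃ K ∈ E m, (K : Set Q) ⊆ ⇑p.2 ⁻¹' {y} ∩ (Φ p.1 : Set Q)}ᶜ from rfl]
  rw [isOpen_compl_iff]
  -- show the "bad" set is closed, using sequences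
  apply IsSeqClosed.isClosed
  intro p a hp hpa
  -- extract data
  choose y K hKE hKsub using hp
  -- the sequence (y n, K n) lives in a compact metric space; extract a convergent subsequence
  obtain ⟨⟨y₀, K₀⟩, -, φ, hφ, hconv⟩ :=
    IsCompact.tendsto_subseq (x := fun n => (y n, K n)) isCompact_univ (fun n => mem_univ _)
  have hyc : Filter.Tendsto (fun n => y (φ n)) Filter.atTop (𝓝 y₀) :=
    (continuous_fst.tendsto _).comp hconv
  have hKc : Filter.Tendsto (fun n => K (φ n)) Filter.atTop (𝓝 K₀) :=
    (continuous_snd.tendsto _).comp hconv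
  have hsc : Filter.Tendsto (fun n => (p (φ n)).1) Filter.atTop (𝓝 a.1) :=
    ((continuous_fst.tendsto _).comp hpa).comp hφ.tendsto_atTop
  have hfc : Filter.Tendsto (fun n => (p (φ n)).2) Filter.atTop (𝓝 a.2) :=
    ((continuous_snd.tendsto _).comp hpa).comp hφ.tendsto_atTop
  have hfu : TendstoUniformly (fun n x => (p (φ n)).2 x) (⇑a.2) Filter.atTop :=
    ContinuousMap.tendsto_iff_tendstoUniformly.mp hfc
  -- K₀ ∈ E m
  have hK₀E : K₀ ∈ E m := (hE m).mem_of_tendsto hKc (Filter.Eventually.of_forall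
    fun n => hKE (φ n))
  -- edist of subsequence sets to limits tends to 0
  have hKd : Filter.Tendsto (fun n => edist (K (φ n)) K₀) Filter.atTop (𝓝 0) :=
    tendsto_edist_zero_of_tendsto hKc
  have hΦd : Filter.Tendsto (fun n => edist (Φ (p (φ n)).1) (Φ a.1)) Filter.atTop (𝓝 0) :=
    tendsto_edist_zero_of_tendsto ((hΦ.tendsto _).comp hsc)
  refine ⟨y₀, K₀, hK₀E, fun x hx => ?_⟩
  -- choose points x_n ∈ K (φ n) closest to x
  have hxn : ∀ n : ℕ, ∃ z ∈ (K (φ n) : Set Q), infEdist x (K (φ n) : Set Q) = edist x z :=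
    fun n => (K (φ n)).isCompact.exists_infEdist_eq_edist (K (φ n)).nonempty x
  choose z hz hzd using hxn
  have hxz : Filter.Tendsto (fun n => z n) Filter.atTop (𝓝 x) := by
    rw [tendsto_iff_edist_tendsto_0]
    have hb : ∀ n, edist (z n) x ≤ edist (K (φ n)) K₀ := by
      intro n
      rw [edist_comm, ← hzd n]
      calc infEdist x (K (φ n) : Set Q)
          ≤ hausdorffEdist (K₀ : Set Q) (K (φ n) : Set Q) :=
            infEdist_le_hausdorffEdist_of_mem hx
        _ = edist (K (φ n)) K₀ := (hausdorffEdist_comm)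
    exact tendsto_of_tendsto_of_tendsto_of_le_of_le tendsto_const_nhds hKd
      (fun n => zero_le) hb
  constructor
  · -- x ∈ a.2 ⁻¹' {y₀}
    have h1 : Filter.Tendsto (fun n => (p (φ n)).2 (z n)) Filter.atTop (𝓝 (a.2 x)) :=
      hfu.tendsto_comp a.2.continuous.continuousAt hxz
    have h2 : ∀ n, (p (φ n)).2 (z n) = y (φ n) := by
      intro n
      have := (hKsub (φ n) (hz n)).1
      simpa using this
    have h3 : Filter.Tendsto (fun n => (p (φ n)).2 (z n)) Filter.atTop (𝓝 y₀) :=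
      hyc.congr fun n => (h2 n).symm
    have : a.2 x = y₀ := tendsto_nhds_unique h1 h3
    simpa using this
  · -- x ∈ Φ a.1
    rw [mem_iff_infEdist_zero_of_closed (Φ a.1).isCompact.isClosed]
    have hb : ∀ n, infEdist x (Φ a.1 : Set Q) ≤
        edist x (z n) + edist (Φ (p (φ n)).1) (Φ a.1) := by
      intro n
      calc infEdist x (Φ a.1 : Set Q)
          ≤ infEdist x (Φ (p (φ n)).1 : Set Q)
            + hausdorffEdist (Φ (p (φ n)).1 : Set Q) (Φ a.1 : Set Q) :=
            infEdist_le_infEdist_add_hausdorffEdist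
        _ ≤ edist x (z n) + edist (Φ (p (φ n)).1) (Φ a.1) := by
            gcongr
            exact infEdist_le_edist_of_mem ((hKsub (φ n) (hz n)).2)
            exact le_rfl
    have hlim : Filter.Tendsto (fun n => edist x (z n) + edist (Φ (p (φ n)).1) (Φ a.1))
        Filter.atTop (𝓝 0) := by
      have h1 : Filter.Tendsto (fun n => edist x (z n)) Filter.atTop (𝓝 0) := by
        have := tendsto_edist_zero_of_tendsto hxz
        simpa [edist_comm] using this
      simpa using h1.add hΦd
    exact le_antisymm (le_of_tendsto_of_tendsto' tendsto_const_nhds hlim hb) zero_le
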